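/- For every t ∈ ℕ, the per-iteration descent inequality holds: F(x(t+1)) + (1/2)(1/η − L − √p·L·s)·‖x(t+1) − x(t)‖^2 ≤ F(x(t)) + (√p·L/2)·Σ_{k=(t−s)_+}^{t−1} ‖x(k+1) − x(k)‖^2. -/

import Mathlib

open Filter Topology

noncomputable abbrev EE (p : ℕ) (d : Fin p → ℕ) : Type :=
  PiLp 2 (fun i : Fin p => EuclideanSpace ℝ (Fin (d i)))

section Aux

open intervalIntegral in
theorem descent_lemma {E : Type*} [NormedAddCommGroup E] [InnerProductSpace ℝ E]
    [CompleteSpace E] (f : E → ℝ) (f' : E → E) (L : ℝ) (hL : 0 ≤ L)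
    (hf : ∀ y, HasGradientAt f (f' y) y)
    (hlip : ∀ y z, ‖f' y - f' z‖ ≤ L * ‖y - z‖) (x y : E) :
    f y ≤ f x + inner ℝ (f' x) (y - x) + L / 2 * ‖y - x‖ ^ 2 := by
  set v := y - x with hv
  have hcf' : Continuous f' := by
    refine (LipschitzWith.of_dist_le_mul (K := Real.toNNReal L) (f := f') ?_).continuous
    intro a b
    rw [dist_eq_norm, dist_eq_norm, Real.coe_toNNReal _ hL]
    exact hlip a b
  have hγ : ∀ u : ℝ, HasDerivAt (fun u : ℝ => x + u • v) v u := by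
    intro u
    simpa using ((hasDerivAt_id u).smul_const v).const_add x
  have hφ : ∀ u : ℝ, HasDerivAt (fun u : ℝ => f (x + u • v))
      (inner ℝ (f' (x + u • v)) v : ℝ) u := by
    intro u
    have h1 := (hf (x + u • v)).hasFDerivAt
    have := h1.comp_hasDerivAt u (hγ u)
    exact this
  have hcont : Continuous fun u : ℝ => (inner ℝ (f' (x + u • v)) v : ℝ) :=
    (hcf'.comp (by continuity)).inner continuous_const
  have hint : ∀ a b : ℝ, IntervalIntegrable
      (fun u : ℝ => (inner ℝ (f' (x + u • v)) v : ℝ)) MeasureTheory.volume a b :=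
    fun a b => hcont.intervalIntegrable a b
  have hxy : x + v = y := by rw [hv]; abel
  have key : f y - f x = ∫ u in (0:ℝ)..1, (inner ℝ (f' (x + u • v)) v : ℝ) := by
    have h2 := intervalIntegral.integral_eq_sub_of_hasDerivAt
      (f := fun u : ℝ => f (x + u • v))
      (a := (0:ℝ)) (b := 1) (fun u _ => hφ u) (hint 0 1)
    simp only [one_smul, zero_smul, add_zero, hxy] at h2
    rw [h2]
  have hsplit : f y - f x - inner ℝ (f' x) v
      = ∫ u in (0:ℝ)..1, ((inner ℝ (f' (x + u • v)) v : ℝ) - inner ℝ (f' x) v) := by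
    rw [intervalIntegral.integral_sub (hint 0 1) intervalIntegrable_const,
      intervalIntegral.integral_const, ← key]
    simp
  have hbound : ∀ u ∈ Set.Icc (0:ℝ) 1,
      (inner ℝ (f' (x + u • v)) v : ℝ) - inner ℝ (f' x) v ≤ L * u * ‖v‖ ^ 2 := by
    intro u hu
    rw [← inner_sub_left]
    calc (inner ℝ (f' (x + u • v) - f' x) v : ℝ) ≤ ‖f' (x + u • v) - f' x‖ * ‖v‖ :=
          real_inner_le_norm _ _
      _ ≤ (L * ‖x + u • v - x‖) * ‖v‖ :=
          mul_le_mul_of_nonneg_right (hlip _ _) (norm_nonneg v)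
      _ = L * u * ‖v‖ ^ 2 := by
          rw [add_sub_cancel_left, norm_smul, Real.norm_eq_abs, abs_of_nonneg hu.1]
          ring
  have hmono : (∫ u in (0:ℝ)..1, ((inner ℝ (f' (x + u • v)) v : ℝ) - inner ℝ (f' x) v))
      ≤ ∫ u in (0:ℝ)..1, L * u * ‖v‖ ^ 2 := by
    apply intervalIntegral.integral_mono_on (by norm_num)
      ((hint 0 1).sub intervalIntegrable_const)
      (Continuous.intervalIntegrable (by continuity) 0 1)
    exact hbound
  have hval : (∫ u in (0:ℝ)..1, L * u * ‖v‖ ^ 2) = L / 2 * ‖v‖ ^ 2 := by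
    have h3 : (fun u : ℝ => L * u * ‖v‖ ^ 2) = fun u : ℝ => (L * ‖v‖ ^ 2) * u := by
      funext u; ring
    rw [h3, intervalIntegral.integral_const_mul, integral_id]
    ring
  nlinarith [hsplit ▸ (hval ▸ hmono)]

theorem esum_ne_bot {ι : Type*} (s : Finset ι) (a : ι → EReal)
    (h : ∀ i ∈ s, a i ≠ ⊥) : ∑ i ∈ s, a i ≠ ⊥ := by
  classical
  induction s using Finset.cons_induction with
  | empty => simp
  | cons i s hi ih =>
    rw [Finset.sum_cons]
    rw [Ne, EReal.add_eq_bot_iff]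
    push_neg
    exact ⟨h i (Finset.mem_cons_self i s), ih fun j hj => h j (Finset.mem_cons.2 (Or.inr hj))⟩

theorem esum_ne_top {ι : Type*} (s : Finset ι) (a : ι → EReal)
    (hbot : ∀ i ∈ s, a i ≠ ⊥) (htop : ∑ i ∈ s, a i ≠ ⊤) : ∀ i ∈ s, a i ≠ ⊤ := by
  classical
  intro i hi hieq
  apply htop
  rw [← Finset.add_sum_erase s a hi, hieq]
  exact EReal.top_add_of_ne_bot
    (esum_ne_bot _ _ fun j hj => hbot j (Finset.mem_of_mem_erase hj))

theorem ereal_coe_sum {ι : Type*} (s : Finset ι) (a : ι → ℝ) :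
    ((∑ i ∈ s, a i : ℝ) : EReal) = ∑ i ∈ s, (a i : EReal) :=
  map_sum (⟨⟨Real.toEReal, EReal.coe_zero⟩, EReal.coe_add⟩ : ℝ →+ EReal) a s

theorem ereal_le_aux {A : EReal} {c b : ℝ} (hA : A ≠ ⊥)
    (h : A + (c : EReal) ≤ (b : EReal)) : A ≠ ⊤ ∧ A.toReal + c ≤ b := by
  have hAt : A ≠ ⊤ := by
    intro hAt
    rw [hAt, EReal.top_add_coe] at h
    exact (EReal.coe_ne_top b) (top_le_iff.mp h)
  refine ⟨hAt, ?_⟩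
  rw [← EReal.coe_toReal hAt hA, ← EReal.coe_add, EReal.coe_le_coe_iff] at h
  exact h

theorem telescope_Ico {E : Type*} [AddCommGroup E] (u : ℕ → E) {a b : ℕ} (h : a ≤ b) :
    ∑ k ∈ Finset.Ico a b, (u (k + 1) - u k) = u b - u a := by
  rw [Finset.sum_Ico_eq_sub _ h, Finset.sum_range_sub, Finset.sum_range_sub]
  abel

theorem pilp_apply_norm_le {ι : Type*} [Fintype ι] (β : ι → Type*)
    [∀ i, SeminormedAddCommGroup (β i)] (z : PiLp 2 β) (i : ι) : ‖z i‖ ≤ ‖z‖ := by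
  rw [PiLp.norm_eq_of_L2]
  have h1 : ‖z i‖ ^ 2 ≤ ∑ j, ‖z j‖ ^ 2 :=
    Finset.single_le_sum (fun j _ => sq_nonneg ‖z j‖) (Finset.mem_univ i)
  calc ‖z i‖ = Real.sqrt (‖z i‖ ^ 2) := (Real.sqrt_sq (norm_nonneg _)).symm
    _ ≤ _ := Real.sqrt_le_sqrt h1

theorem pilp_norm_le_norm {ι : Type*} [Fintype ι] (β : ι → Type*)
    [∀ i, SeminormedAddCommGroup (β i)] (z w : PiLp 2 β) (h : ∀ i, ‖z i‖ ≤ ‖w i‖) :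
    ‖z‖ ≤ ‖w‖ := by
  rw [PiLp.norm_eq_of_L2, PiLp.norm_eq_of_L2]
  apply Real.sqrt_le_sqrt
  exact Finset.sum_le_sum fun i _ => pow_le_pow_left₀ (norm_nonneg _) (h i) 2

theorem pilp_sum_norm_le {ι : Type*} [Fintype ι] (β : ι → Type*)
    [∀ i, SeminormedAddCommGroup (β i)] (z : PiLp 2 β) :
    ∑ i, ‖z i‖ ≤ Real.sqrt (Fintype.card ι) * ‖z‖ := by
  have h1 : (∑ i, ‖z i‖) ^ 2 ≤ (Fintype.card ι) * ∑ i, ‖z i‖ ^ 2 := by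
    simpa using sq_sum_le_card_mul_sum_sq (s := Finset.univ) (f := fun i => ‖z i‖)
  have h2 : (0:ℝ) ≤ ∑ i, ‖z i‖ := Finset.sum_nonneg fun i _ => norm_nonneg _
  calc ∑ i, ‖z i‖ = Real.sqrt ((∑ i, ‖z i‖) ^ 2) := (Real.sqrt_sq h2).symm
    _ ≤ Real.sqrt ((Fintype.card ι) * ∑ i, ‖z i‖ ^ 2) := Real.sqrt_le_sqrt h1
    _ = Real.sqrt (Fintype.card ι) * ‖z‖ := by
        rw [Real.sqrt_mul (by positivity), PiLp.norm_eq_of_L2]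

theorem pilp_sum_apply {ι κ : Type*} [Fintype ι] (β : ι → Type*)
    [∀ i, SeminormedAddCommGroup (β i)] (V : κ → PiLp 2 β) (K : Finset κ) (j : ι) :
    (∑ k ∈ K, V k) j = ∑ k ∈ K, V k j := by
  classical
  induction K using Finset.cons_induction with
  | empty => simp
  | cons a s ha ih => rw [Finset.sum_cons, Finset.sum_cons, PiLp.add_apply, ih]

end Aux

theorem stmt_5
    (p s : ℕ) (hp : 1 ≤ p) (d : Fin p → ℕ) (hd : ∀ i, 1 ≤ d i)
    (τ : Fin p → Fin p → ℕ → ℕ)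
    (hτ_le : ∀ i j t, τ i j t ≤ t)
    (hτ_ge : ∀ i j t, t ≤ τ i j t + s)
    (hτ_self : ∀ i t, τ i i t = t)
    (x : (i : Fin p) → ℕ → EuclideanSpace ℝ (Fin (d i)))
    (X : ℕ → EE p d) (hX : ∀ t i, X t i = x i t)
    (Xl : Fin p → ℕ → EE p d) (hXl : ∀ i t j, Xl i t j = x j (τ i j t))
    (T : Fin p → Set ℕ)
    (hT : ∀ i t, ∃ k ∈ T i, t ≤ k ∧ k ≤ t + s)
    (η L : ℝ) (hη : 0 < η) (hL : 0 < L)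
    (f : EE p d → ℝ) (f' : EE p d → EE p d)
    (hf : ∀ y, HasGradientAt f (f' y) y)
    (hlip : ∀ y z, ‖f' y - f' z‖ ≤ L * ‖y - z‖)
    (g : (i : Fin p) → EuclideanSpace ℝ (Fin (d i)) → EReal)
    (hg_nebot : ∀ i z, g i z ≠ ⊥)
    (hg_proper : ∀ i, ∃ z, g i z ≠ ⊤)
    (hg_lsc : ∀ i, LowerSemicontinuous (g i))
    (F : EE p d → EReal)
    (hF : ∀ y, F y = (f y : EReal) + ∑ i, g i (y i))
    (hF_bdd : ∃ m : ℝ, ∀ y, (m : EReal) ≤ F y)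
    (hF0 : F (X 0) < ⊤)
    (hskip : ∀ i t, t ∉ T i → x i (t + 1) = x i t)
    (hupd : ∀ i t, t ∈ T i → ∀ z : EuclideanSpace ℝ (Fin (d i)),
      g i (x i (t + 1)) +
        ((1 / (2 * η) * ‖x i (t + 1) - (x i t - η • f' (Xl i t) i)‖ ^ 2 : ℝ) : EReal)
      ≤ g i z + ((1 / (2 * η) * ‖z - (x i t - η • f' (Xl i t) i)‖ ^ 2 : ℝ) : EReal))
    :
    ∀ t : ℕ,
      F (X (t + 1)) +
        ((1 / 2 * (1 / η - L - Real.sqrt p * L * s) * ‖X (t + 1) - X t‖ ^ 2 : ℝ) : EReal)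
      ≤ F (X t) +
        ((Real.sqrt p * L / 2 *
            ∑ k ∈ Finset.Ico (t - s) t, ‖X (k + 1) - X k‖ ^ 2 : ℝ) : EReal) := by
  intro t
  classical
  by_cases htop : F (X t) = ⊤
  · rw [htop, EReal.top_add_coe]
    exact le_top
  -- finiteness of g at time t
  have hgt_ne_top : ∀ i, g i (x i t) ≠ ⊤ := by
    have hsum : (∑ i, g i ((X t) i)) ≠ ⊤ := by
      intro h
      apply htop
      rw [hF, h]
      exact EReal.add_top_of_ne_bot (EReal.coe_ne_bot _)
    intro i
    have := esum_ne_top Finset.univ (fun j => g j ((X t) j))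
      (fun j _ => hg_nebot j _) hsum i (Finset.mem_univ i)
    simpa only [hX] using this
  set r : Fin p → ℝ := fun i => (g i (x i t)).toReal with hr
  have hrval : ∀ i, g i (x i t) = (r i : EReal) :=
    fun i => (EReal.coe_toReal (hgt_ne_top i) (hg_nebot i _)).symm
  set w : (i : Fin p) → EuclideanSpace ℝ (Fin (d i)) := fun i => f' (Xl i t) i with hw
  set Δ : (i : Fin p) → EuclideanSpace ℝ (Fin (d i)) := fun i => x i (t+1) - x i t with hΔ
  have hstep : ∀ i, ∃ r' : ℝ, g i (x i (t+1)) = (r' : EReal) ∧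
      r' + 1/(2*η) * ‖Δ i‖^2 + (inner ℝ (Δ i) (w i) : ℝ) ≤ r i := by
    intro i
    by_cases hiT : t ∈ T i
    · have h := hupd i t hiT (x i t)
      rw [hrval i, ← EReal.coe_add] at h
      obtain ⟨hne, hle⟩ := ereal_le_aux (hg_nebot i _) h
      refine ⟨(g i (x i (t+1))).toReal, (EReal.coe_toReal hne (hg_nebot i _)).symm, ?_⟩
      have hnorm2 : ‖x i t - (x i t - η • w i)‖^2 = ‖η • w i‖^2 := by
        rw [sub_sub_cancel]
      have hnorm1 : ‖x i (t+1) - (x i t - η • w i)‖^2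
          = ‖Δ i‖^2 + 2 * (η * (inner ℝ (Δ i) (w i) : ℝ)) + ‖η • w i‖^2 := by
        have he : x i (t+1) - (x i t - η • w i) = Δ i + η • w i := by
          rw [hΔ]
          exact (sub_sub_eq_add_sub _ _ _).trans (add_sub_right_comm _ _ _)
        rw [he, norm_add_sq_real, real_inner_smul_right]
      rw [hnorm1, hnorm2] at hle
      have hη' : η ≠ 0 := ne_of_gt hη
      have h2η : (0:ℝ) < 2 * η := by linarith
      have hfact : 1/(2*η) * (2 * (η * (inner ℝ (Δ i) (w i) : ℝ)))
          = (inner ℝ (Δ i) (w i) : ℝ) := by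
        field_simp
      rw [mul_add, mul_add, hfact] at hle
      linarith
    · have hxeq : x i (t+1) = x i t := hskip i t hiT
      refine ⟨r i, by rw [hxeq, hrval i], ?_⟩
      have : Δ i = 0 := by rw [hΔ]; simp [hxeq]
      simp [this]
  choose r' hr'val hr'ineq using hstep
  have hFt : F (X t) = ((f (X t) + ∑ i, r i : ℝ) : EReal) := by
    rw [hF, EReal.coe_add, ereal_coe_sum]
    congr 1
    exact Finset.sum_congr rfl fun i _ => by rw [hX, hrval i]
  have hFt1 : F (X (t+1)) = ((f (X (t+1)) + ∑ i, r' i : ℝ) : EReal) := by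
    rw [hF, EReal.coe_add, ereal_coe_sum]
    congr 1
    exact Finset.sum_congr rfl fun i _ => by rw [hX, hr'val i]
  rw [hFt, hFt1, ← EReal.coe_add, ← EReal.coe_add, EReal.coe_le_coe_iff]
  -- now a purely real inequality
  set v : EE p d := X (t+1) - X t with hv
  have hvi : ∀ i, v i = Δ i := by
    intro i
    rw [hv, PiLp.sub_apply, hX, hX, hΔ]
  have hnormv : ‖v‖^2 = ∑ i, ‖Δ i‖^2 := by
    rw [PiLp.norm_sq_eq_of_L2]
    exact Finset.sum_congr rfl fun i _ => by rw [hvi i]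
  have hdesc : f (X (t+1)) ≤ f (X t) + (inner ℝ (f' (X t)) v : ℝ) + L/2 * ‖v‖^2 :=
    descent_lemma f f' L hL.le hf hlip (X t) (X (t+1))
  have hsum_r' : ∑ i, r' i ≤ ∑ i, r i - (1/(2*η) * ‖v‖^2
      + ∑ i, (inner ℝ (Δ i) (w i) : ℝ)) := by
    have h1 : ∑ i, (r' i + 1/(2*η) * ‖Δ i‖^2 + (inner ℝ (Δ i) (w i) : ℝ)) ≤ ∑ i, r i :=
      Finset.sum_le_sum fun i _ => hr'ineq i
    rw [Finset.sum_add_distrib, Finset.sum_add_distrib, ← Finset.mul_sum, ← hnormv] at h1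
    linarith
  have hinner : (inner ℝ (f' (X t)) v : ℝ) = ∑ i, (inner ℝ (Δ i) (f' (X t) i) : ℝ) := by
    rw [PiLp.inner_apply]
    exact Finset.sum_congr rfl fun i _ => by rw [hvi i, real_inner_comm]
  set S : ℝ := ∑ k ∈ Finset.Ico (t - s) t, ‖X (k+1) - X k‖ with hS
  have hlag : ∀ i, ‖X t - Xl i t‖ ≤ S := by
    intro i
    set V : ℕ → EE p d :=
      fun k => WithLp.toLp 2 (fun j => if τ i j t ≤ k then x j (k+1) - x j k else 0) with hV
    have hVsum : (∑ k ∈ Finset.Ico (t - s) t, V k) = X t - Xl i t := by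
      refine PiLp.ext fun j => ?_
      rw [pilp_sum_apply]
      have hτle : τ i j t ≤ t := hτ_le i j t
      have hτge : t - s ≤ τ i j t := Nat.sub_le_of_le_add (hτ_ge i j t)
      calc ∑ k ∈ Finset.Ico (t-s) t, V k j
          = ∑ k ∈ Finset.Ico (t-s) t,
              (if τ i j t ≤ k then x j (k+1) - x j k else 0) := by
            simp only [hV]
        _ = ∑ k ∈ {k ∈ Finset.Ico (t-s) t | τ i j t ≤ k}, (x j (k+1) - x j k) :=
            (Finset.sum_filter _ _).symm
        _ = ∑ k ∈ Finset.Ico (τ i j t) t, (x j (k+1) - x j k) := by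
            rw [Finset.Ico_filter_le, max_eq_right hτge]
        _ = x j t - x j (τ i j t) := telescope_Ico _ hτle
        _ = (X t - Xl i t) j := by rw [PiLp.sub_apply, hX, hXl]
    have hVle : ∀ k ∈ Finset.Ico (t-s) t, ‖V k‖ ≤ ‖X (k+1) - X k‖ := by
      intro k _
      apply pilp_norm_le_norm
      intro j
      rw [PiLp.sub_apply, hX, hX]
      by_cases h : τ i j t ≤ k
      · simp only [hV, if_pos h]
        exact le_refl _
      · simp only [hV, if_neg h]
        simp
    calc ‖X t - Xl i t‖ = ‖∑ k ∈ Finset.Ico (t-s) t, V k‖ := by rw [hVsum]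
      _ ≤ ∑ k ∈ Finset.Ico (t-s) t, ‖V k‖ := norm_sum_le _ _
      _ ≤ S := Finset.sum_le_sum hVle
  have hblock : ∀ i, (inner ℝ (Δ i) (f' (X t) i) : ℝ) - (inner ℝ (Δ i) (w i) : ℝ)
      ≤ ‖Δ i‖ * (L * S) := by
    intro i
    rw [← inner_sub_right]
    have h1 : (inner ℝ (Δ i) (f' (X t) i - w i) : ℝ) ≤ ‖Δ i‖ * ‖f' (X t) i - w i‖ :=
      real_inner_le_norm _ _
    have h2 : ‖f' (X t) i - w i‖ ≤ ‖f' (X t) - f' (Xl i t)‖ := by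
      have : f' (X t) i - w i = (f' (X t) - f' (Xl i t)) i := by
        rw [hw, PiLp.sub_apply]
      rw [this]
      exact pilp_apply_norm_le _ _ i
    have h3 : ‖f' (X t) - f' (Xl i t)‖ ≤ L * ‖X t - Xl i t‖ := hlip _ _
    have h4 : L * ‖X t - Xl i t‖ ≤ L * S := by
      exact mul_le_mul_of_nonneg_left (hlag i) hL.le
    calc (inner ℝ (Δ i) (f' (X t) i - w i) : ℝ) ≤ ‖Δ i‖ * ‖f' (X t) i - w i‖ := h1
      _ ≤ ‖Δ i‖ * (L * S) := by
          apply mul_le_mul_of_nonneg_left _ (norm_nonneg _)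
          exact le_trans h2 (le_trans h3 h4)
  have hsumΔ : ∑ i, ‖Δ i‖ ≤ Real.sqrt p * ‖v‖ := by
    have := pilp_sum_norm_le (fun i : Fin p => EuclideanSpace ℝ (Fin (d i))) v
    simp only [Fintype.card_fin] at this
    calc ∑ i, ‖Δ i‖ = ∑ i, ‖v i‖ := Finset.sum_congr rfl fun i _ => by rw [hvi i]
      _ ≤ Real.sqrt p * ‖v‖ := this
  have hSnn : 0 ≤ S := Finset.sum_nonneg fun k _ => norm_nonneg _
  have hIW : (inner ℝ (f' (X t)) v : ℝ) - ∑ i, (inner ℝ (Δ i) (w i) : ℝ)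
      ≤ Real.sqrt p * L * s / 2 * ‖v‖^2
        + Real.sqrt p * L / 2 * ∑ k ∈ Finset.Ico (t - s) t, ‖X (k+1) - X k‖^2 := by
    have h1 : (inner ℝ (f' (X t)) v : ℝ) - ∑ i, (inner ℝ (Δ i) (w i) : ℝ)
        ≤ (∑ i, ‖Δ i‖) * (L * S) := by
      rw [hinner, ← Finset.sum_sub_distrib, Finset.sum_mul]
      exact Finset.sum_le_sum fun i _ => hblock i
    have h2 : (∑ i, ‖Δ i‖) * (L * S) ≤ (Real.sqrt p * ‖v‖) * (L * S) := by
      apply mul_le_mul_of_nonneg_right hsumΔ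
      positivity
    have h3 : ∀ k ∈ Finset.Ico (t - s) t, ‖v‖ * ‖X (k+1) - X k‖
        ≤ (‖v‖^2 + ‖X (k+1) - X k‖^2) / 2 := by
      intro k _
      nlinarith [sq_nonneg (‖v‖ - ‖X (k+1) - X k‖)]
    have hcard : ((Finset.Ico (t - s) t).card : ℝ) ≤ s := by
      rw [Nat.card_Ico]
      exact_mod_cast Nat.sub_le_of_le_add (by omega)
    have h4 : ‖v‖ * S ≤ (s * ‖v‖^2 + ∑ k ∈ Finset.Ico (t - s) t, ‖X (k+1) - X k‖^2) / 2 := by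
      rw [hS, Finset.mul_sum]
      calc ∑ k ∈ Finset.Ico (t - s) t, ‖v‖ * ‖X (k+1) - X k‖
          ≤ ∑ k ∈ Finset.Ico (t - s) t, (‖v‖^2 + ‖X (k+1) - X k‖^2) / 2 :=
            Finset.sum_le_sum h3
        _ = (((Finset.Ico (t - s) t).card : ℝ) * ‖v‖^2
              + ∑ k ∈ Finset.Ico (t - s) t, ‖X (k+1) - X k‖^2) / 2 := by
            rw [← Finset.sum_div, Finset.sum_add_distrib, Finset.sum_const, nsmul_eq_mul]
        _ ≤ _ := by
            have : ((Finset.Ico (t - s) t).card : ℝ) * ‖v‖^2 ≤ (s : ℝ) * ‖v‖^2 :=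
              mul_le_mul_of_nonneg_right hcard (sq_nonneg _)
            linarith
    have hpl : (0:ℝ) ≤ Real.sqrt p * L := by positivity
    calc (inner ℝ (f' (X t)) v : ℝ) - ∑ i, (inner ℝ (Δ i) (w i) : ℝ)
        ≤ (Real.sqrt p * ‖v‖) * (L * S) := le_trans h1 h2
      _ = (Real.sqrt p * L) * (‖v‖ * S) := by ring
      _ ≤ (Real.sqrt p * L) *
            ((s * ‖v‖^2 + ∑ k ∈ Finset.Ico (t - s) t, ‖X (k+1) - X k‖^2) / 2) :=
          mul_le_mul_of_nonneg_left h4 hpl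
      _ = Real.sqrt p * L * s / 2 * ‖v‖^2
          + Real.sqrt p * L / 2 * ∑ k ∈ Finset.Ico (t - s) t, ‖X (k+1) - X k‖^2 := by
          ring
  have hgoal : ‖X (t+1) - X t‖ = ‖v‖ := by rw [hv]
  rw [hgoal]
  have hinv : 1/(2*η) * ‖v‖^2 = 1/2 * (1/η) * ‖v‖^2 := by
    rw [one_div, mul_inv]
    ring
  linarith [hdesc, hsum_r', hIW, hinv]
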